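/- arXiv:1008.1667 — 3 statements merged into one kernel-verified Lean document; each statement's English description precedes it below -/
import Mathlib

section
/- For every n, m ≥ 1, every substring of x_n(m) of length at least 4n + 5 contains some u_i (1 ≤ i ≤ 2n+1) as a substring. Equivalently, any string that occurs as a substring of x_n(m) and contains none of the u_i as a substring has length at most 4n + 4. -/
/-! ## Transducers

A deterministic sequential transducer over the binary alphabet `Bool`
(`false` = 0, `true` = 1), with state set `{0, …, n-1}` (representing the
states `1, …, n` of the paper) and start state `0` (the paper's state `1`). -/

structure Transducer where
  n : ℕ
  npos : 0 < n
  delta : Fin n → Bool → Fin n × List Bool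

namespace Transducer

/-- The start state. -/
def start (T : Transducer) : Fin T.n := ⟨0, T.npos⟩

/-- The (state) size of a transducer: its number of states. -/
def size (T : Transducer) : ℕ := T.n

/-- Running `T` from state `q` on an input string: resulting state and output. -/
def run (T : Transducer) (q : Fin T.n) : List Bool → Fin T.n × List Bool
  | [] => (q, [])
  | a :: x =>
    let s := T.delta q a
    let r := T.run s.1 x
    (r.1, s.2 ++ r.2)

/-- The function `{0,1}* → {0,1}*` computed by the transducer `T`. -/
def output (T : Transducer) (p : List Bool) : List Bool :=
  (T.run T.start p).2

end Transducer

/-- The one-state identity transducer. -/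
def idTransducer : Transducer :=
  ⟨1, Nat.one_pos, fun q b => (q, [b])⟩

/-! ## The standard encoding `S₀` -/

/-- `bin i`: the binary representation of `i ≥ 1`, most significant bit first. -/
def binRep (i : ℕ) : List Bool := (Nat.bits i).reverse

/-- `v† = v₁0v₂0⋯v_{m-1}0v_m1`. -/
def dagger : List Bool → List Bool
  | [] => []
  | [a] => [a, true]
  | a :: b :: v => a :: false :: dagger (b :: v)

/-- `v◇`: the bitwise complement of `(1v)†`. -/
def diamond (v : List Bool) : List Bool := (dagger (true :: v)).map (!·)

/-- The encoding `bin(i_t)‡ ⬝ v_t◇` of a single transition from state `j`,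
where `bin(i_t)‡ = ε` for a self-loop and `bin(i_t)† ` otherwise. -/
def encTransition {n : ℕ} (j : Fin n) (t : Fin n × List Bool) : List Bool :=
  (if t.1 = j then [] else dagger (binRep (t.1.val + 1))) ++ diamond t.2

/-- The standard encoding of a transducer: the concatenation, over the states
`j = 1, …, n` in order, of the encodings of the transitions on input `0` and
input `1` from `j`. -/
def stdEnc (T : Transducer) : List Bool :=
  (List.finRange T.n).flatMap fun j =>
    encTransition j (T.delta j false) ++ encTransition j (T.delta j true)

/-- `D_{S₀}`, the set of standard encodings of transducers. -/
def DS0 : Set (List Bool) := Set.range stdEnc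

/-- The set of sizes `|σ| + |p|` of descriptions `(T_σ, p)` of `x` with respect
to the standard encoding. -/
def stdSizes (x : List Bool) : Set ℕ :=
  {c | ∃ (T : Transducer) (p : List Bool),
    T.output p = x ∧ c = (stdEnc T).length + p.length}

/-- `C x`: the finite-state complexity of `x` w.r.t. the standard encoding. -/
noncomputable def Cstd (x : List Bool) : ℕ := sInf (stdSizes x)

/-- `L_{≤ m}` w.r.t. the standard encoding: strings having a minimal
description by a transducer with at most `m` states. -/
def stdLle (m : ℕ) : Set (List Bool) :=
  {x | ∃ (T : Transducer) (p : List Bool),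
    T.output p = x ∧ (stdEnc T).length + p.length = Cstd x ∧ T.size ≤ m}

/-! ## Computable encodings -/

/-- A computable encoding `S = (D_S, f_S)` of all transducers: a decidable
(computable) set `D_S ⊆ {0,1}*` together with a computable bijection
`f_S : D_S → 𝒯_DGSM`, presented via a decoding function
`decode : {0,1}* → Option Transducer` defined exactly on `D_S`; its
computability is expressed via the (injective) standard encoding `stdEnc`. -/
structure CompEncoding where
  D : Set (List Bool)
  dec : ComputablePred (· ∈ D)
  decode : List Bool → Option Transducer
  decode_dom : ∀ σ, (decode σ).isSome ↔ σ ∈ D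
  decode_inj : ∀ σ₁ ∈ D, ∀ σ₂ ∈ D, decode σ₁ = decode σ₂ → σ₁ = σ₂
  decode_surj : ∀ T : Transducer, ∃ σ, decode σ = some T
  decode_comp : Computable fun σ => (decode σ).map stdEnc

namespace CompEncoding

/-- The set of sizes `|σ| + |p|` of descriptions `(T^S_σ, p)` of `x`. -/
def sizes (S : CompEncoding) (x : List Bool) : Set ℕ :=
  {c | ∃ (σ : List Bool) (T : Transducer) (p : List Bool),
    S.decode σ = some T ∧ T.output p = x ∧ c = σ.length + p.length}

/-- `C_S x`: the finite-state complexity of `x` w.r.t. the encoding `S`. -/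
noncomputable def C (S : CompEncoding) (x : List Bool) : ℕ := sInf (S.sizes x)

/-- `L^S_{≤ m}`: strings having a minimal description by a transducer with at
most `m` states (this is empty for `m = 0` since every transducer has at
least one state). -/
def Lle (S : CompEncoding) (m : ℕ) : Set (List Bool) :=
  {x | ∃ (σ : List Bool) (T : Transducer) (p : List Bool),
    S.decode σ = some T ∧ T.output p = x ∧
    σ.length + p.length = S.C x ∧ T.size ≤ m}

/-- `L^S_{= m} = L^S_{≤ m} \ L^S_{≤ m-1}`. -/
def Leq (S : CompEncoding) (m : ℕ) : Set (List Bool) := S.Lle m \ S.Lle (m - 1)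

/-- `L^S_{∃min m}`: strings having a minimal description by a transducer with
exactly `m` states. -/
def LexistsMin (S : CompEncoding) (m : ℕ) : Set (List Bool) :=
  {x | ∃ (σ : List Bool) (T : Transducer) (p : List Bool),
    S.decode σ = some T ∧ T.output p = x ∧
    σ.length + p.length = S.C x ∧ T.size = m}

end CompEncoding

/-! ## The strings `u_i` and `x_n(m)` from the proof of Theorem 1 -/

/-- `u_i = 1 0^i 1^{2n+2-i}` (for `1 ≤ i ≤ 2n+1`, a string of length `2n+3`). -/
def u (n i : ℕ) : List Bool :=
  true :: (List.replicate i false ++ List.replicate (2 * n + 2 - i) true)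

/-- `x_n(m) = u_1^{m²} u_2^{m²} ⋯ u_{2n+1}^{m²}`. -/
def xnm (n m : ℕ) : List Bool :=
  (List.range (2 * n + 1)).flatMap fun i => (List.replicate (m ^ 2) (u n (i + 1))).flatten

/-! ## The transducer `T₁` and input `p₁` from the proof of Theorem 1 -/

/-- The `2n`-state transducer `T₁` with `Δ(j,0) = (j, u_j^m)` for `1 ≤ j ≤ 2n`,
`Δ(j,1) = (j+1, ε)` for `1 ≤ j ≤ 2n-1`, and `Δ(2n,1) = (2n, u_{2n+1}^m)`. -/
def T1 (n m : ℕ) (hn : 0 < n) : Transducer where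
  n := 2 * n
  npos := by omega
  delta := fun j b =>
    match b with
    | false => (j, (List.replicate m (u n (j.val + 1))).flatten)
    | true =>
      if h : j.val + 1 < 2 * n then (⟨j.val + 1, h⟩, [])
      else (j, (List.replicate m (u n (2 * n + 1))).flatten)

/-- `p₁ = (0^m 1)^{2n-1} 0^m 1^m`. -/
def p1 (n m : ℕ) : List Bool :=
  (List.replicate (2 * n - 1) (List.replicate m false ++ [true])).flatten
    ++ List.replicate m false ++ List.replicate m true

/-! ## The transducers `T_n` from Section 5 -/

/-- `p_i`: the `i`-th prime (`p₁ = 2`, `p₂ = 3`, …). -/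
noncomputable def nthPrime (i : ℕ) : ℕ := Nat.nth Nat.Prime (i - 1)

/-- The `n`-state transducer `T_n` with `Δ_n(1,0) = (1, 0^{p_n})`,
`Δ_n(i,0) = (i, ε)` for `2 ≤ i ≤ n`, `Δ_n(j,1) = (j+1, ε)` for
`1 ≤ j ≤ n-1`, and `Δ_n(n,1) = (n, ε)`. -/
noncomputable def Tsec5 (n : ℕ) (hn : 0 < n) : Transducer where
  n := n
  npos := hn
  delta := fun j b =>
    match b with
    | false =>
      if j.val = 0 then (j, List.replicate (nthPrime n) false) else (j, [])
    | true =>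
      if h : j.val + 1 < n then (⟨j.val + 1, h⟩, []) else (j, [])

/-- The defining properties of the encoding `S₁` of Theorem 4: each `T_n` is
encoded by `bin(n)`, and every transducer that is not one of the `T_n` is
encoded by `0` concatenated with its standard encoding. -/
def IsS1 (S : CompEncoding) : Prop :=
  (∀ (n : ℕ) (hn : 0 < n), S.decode (binRep n) = some (Tsec5 n hn)) ∧
  (∀ T : Transducer, (∀ (n : ℕ) (hn : 0 < n), T ≠ Tsec5 n hn) →
    S.decode (false :: stdEnc T) = some T)

/-- The defining properties of the encoding `S₁'` of Corollary 2: each `T_n` is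
encoded by `bin(n)† ⬝ 1^n`, and every transducer `T` that is not one of the
`T_n`, with standard encoding `σ`, is encoded by `0 ⬝ σ† ⬝ 1^{2^{|σ|}}`. -/
def IsS1' (S : CompEncoding) : Prop :=
  (∀ (n : ℕ) (hn : 0 < n),
    S.decode (dagger (binRep n) ++ List.replicate n true) = some (Tsec5 n hn)) ∧
  (∀ T : Transducer, (∀ (n : ℕ) (hn : 0 < n), T ≠ Tsec5 n hn) →
    S.decode (false :: (dagger (stdEnc T) ++
      List.replicate (2 ^ (stdEnc T).length) true)) = some T)


private lemma flatten_flatMap' {α β : Type*} (l : List α) (f : α → List (List β)) :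
    (l.flatMap f).flatten = l.flatMap fun a => (f a).flatten := by
  induction l with
  | nil => simp
  | cons a l ih => simp [ih]

private lemma key_lemma (L : ℕ) (hL : 0 < L) : ∀ (bs : List (List Bool)) (s w t : List Bool),
    (∀ b ∈ bs, b.length = L) → s ++ w ++ t = bs.flatten → 2 * L - 1 ≤ w.length →
    ∃ b ∈ bs, b <:+: w := by
  intro bs
  induction bs with
  | nil =>
    intro s w t _ h hw
    have := congrArg List.length h
    simp only [List.flatten_nil, List.length_nil, List.length_append] at this
    omega
  | cons b bs IH =>
    intro s w t hlen h hw
    have hbL : b.length = L := hlen b (List.mem_cons_self)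
    rw [List.flatten_cons] at h
    by_cases hs : L ≤ s.length
    · have hb : s.take L = b := by
        have h' := congrArg (List.take L) h
        simpa [List.take_append, Nat.sub_eq_zero_of_le hs, hbL] using h'
      have hs' : s = b ++ s.drop L := by rw [← hb]; exact (List.take_append_drop L s).symm
      have h2 : s.drop L ++ w ++ t = bs.flatten := by
        apply List.append_cancel_left (as := b)
        rw [hs'] at h
        simpa [List.append_assoc] using h
      obtain ⟨b', hb', hinf⟩ := IH _ _ _ (fun x hx => hlen x (List.mem_cons_of_mem _ hx)) h2 hw
      exact ⟨b', List.mem_cons_of_mem _ hb', hinf⟩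
    · push_neg at hs
      rcases eq_or_ne s [] with rfl | hne
      · have hLw : L ≤ w.length := by omega
        have h' : w.take L = b := by
          have := congrArg (List.take L) h
          simpa [List.take_append, Nat.sub_eq_zero_of_le hLw, hbL] using this
        exact ⟨b, List.mem_cons_self, h' ▸ (List.take_prefix L w).isInfix⟩
      · have hs1 : 1 ≤ s.length := List.length_pos_iff.2 hne
        cases bs with
        | nil =>
          have := congrArg List.length h
          simp only [List.flatten_nil, List.append_nil, List.length_append, hbL] at this
          omega
        | cons b₂ bs' =>
          have hb2L : b₂.length = L := hlen b₂ (List.mem_cons_of_mem _ (List.mem_cons_self))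
          rw [List.flatten_cons] at h
          have key : (w.drop (L - s.length)).take L = b₂ := by
            have h' := congrArg (fun l => (l.drop L).take L) h
            simp only [List.drop_append, List.take_append,
              List.length_drop, List.length_append, hbL, hb2L, Nat.sub_self, List.drop_zero,
              List.take_of_length_le hb2L.le, List.drop_eq_nil_of_le hs.le,
              List.drop_eq_nil_of_le hbL.le, List.take_nil, List.nil_append] at h'
            rw [show L - (w.length - (L - s.length)) = 0 by omega] at h'
            simpa using h'
          exact ⟨b₂, List.mem_cons_of_mem _ (List.mem_cons_self),
            key ▸ ((List.take_prefix L _).isInfix.trans (List.drop_suffix _ w).isInfix)⟩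

theorem stmt8 (n m : ℕ) (hn : 1 ≤ n) (hm : 1 ≤ m) :
    (∀ w : List Bool, w <:+: xnm n m → 4 * n + 5 ≤ w.length →
      ∃ i, 1 ≤ i ∧ i ≤ 2 * n + 1 ∧ u n i <:+: w) ∧
    (∀ w : List Bool, w <:+: xnm n m →
      (∀ i, 1 ≤ i → i ≤ 2 * n + 1 → ¬ u n i <:+: w) → w.length ≤ 4 * n + 4) := by
  set blocks : List (List Bool) :=
    (List.range (2 * n + 1)).flatMap fun i => List.replicate (m ^ 2) (u n (i + 1)) with hbl
  have hx : blocks.flatten = xnm n m := by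
    rw [hbl, flatten_flatMap']
    rfl
  have hmem : ∀ b ∈ blocks, ∃ i, 1 ≤ i ∧ i ≤ 2 * n + 1 ∧ b = u n i := by
    intro b hb
    rw [hbl, List.mem_flatMap] at hb
    obtain ⟨i, hi, hb⟩ := hb
    rw [List.mem_range] at hi
    rw [List.eq_of_mem_replicate hb]
    exact ⟨i + 1, by omega, by omega, rfl⟩
  have hlenb : ∀ b ∈ blocks, b.length = 2 * n + 3 := by
    intro b hb
    obtain ⟨i, hi1, hi2, rfl⟩ := hmem b hb
    simp [u]
    omega
  have part1 : ∀ w : List Bool, w <:+: xnm n m → 4 * n + 5 ≤ w.length →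
      ∃ i, 1 ≤ i ∧ i ≤ 2 * n + 1 ∧ u n i <:+: w := by
    intro w hw hl
    obtain ⟨s, t, heq⟩ := hw
    rw [← hx] at heq
    obtain ⟨b, hb, hinf⟩ :=
      key_lemma (2 * n + 3) (by omega) blocks s w t hlenb heq (by omega)
    obtain ⟨i, hi1, hi2, rfl⟩ := hmem b hb
    exact ⟨i, hi1, hi2, hinf⟩
  refine ⟨part1, fun w hw hno => ?_⟩
  by_contra hlen
  push_neg at hlen
  obtain ⟨i, hi1, hi2, hinf⟩ := part1 w hw (by omega)
  exact hno i hi1 hi2 hinf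
end

section
/- There exists a computable encoding S₁ of all transducers such that L^{S₁}_{≤n−1} is strictly included in L^{S₁}_{≤n} for every n ≥ 1. -/
namespace Stmt11

/-! ### Bits -/

/-- little-endian binary representation -/
def myBits : ℕ → List Bool
  | 0 => []
  | (n+1) => (decide ((n+1) % 2 = 1)) :: myBits ((n+1)/2)
decreasing_by exact Nat.div_lt_self (Nat.succ_pos n) one_lt_two

def ofBits (l : List Bool) : ℕ := l.foldr (fun b acc => cond b 1 0 + 2 * acc) 0

@[simp] lemma ofBits_nil : ofBits [] = 0 := rfl

@[simp] lemma ofBits_cons (b : Bool) (l : List Bool) :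
    ofBits (b :: l) = cond b 1 0 + 2 * ofBits l := rfl

@[simp] lemma myBits_zero : myBits 0 = [] := by rw [myBits]

lemma myBits_pos {n : ℕ} (h : 0 < n) :
    myBits n = (decide (n % 2 = 1)) :: myBits (n / 2) := by
  cases n with
  | zero => omega
  | succ m => rw [myBits]

lemma getLast?_cons_ne {b : Bool} {t : List Bool} (h : t ≠ []) :
    (b :: t).getLast? = t.getLast? := by
  cases t with
  | nil => simp at h
  | cons c s => simp [List.getLast?_cons_cons]

lemma ofBits_myBits : ∀ n, ofBits (myBits n) = n := by
  intro n
  induction n using Nat.strong_induction_on with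
  | _ n ih =>
    rcases Nat.eq_zero_or_pos n with h | h
    · subst h; simp
    · rw [myBits_pos h, ofBits_cons, ih (n / 2) (Nat.div_lt_self h one_lt_two)]
      rcases Nat.mod_two_eq_zero_or_one n with h2 | h2 <;> simp [h2] <;> omega

lemma bits_eq_myBits : ∀ n, Nat.bits n = myBits n := by
  intro n
  induction n using Nat.strong_induction_on with
  | _ n ih =>
    rcases Nat.eq_zero_or_pos n with h | h
    · subst h; simp [Nat.zero_bits]
    · rw [myBits_pos h, ← ih (n / 2) (Nat.div_lt_self h one_lt_two)]
      rcases Nat.mod_two_eq_zero_or_one n with h2 | h2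
      · obtain ⟨m, rfl⟩ : ∃ m, n = 2 * m := ⟨n / 2, by omega⟩
        rw [Nat.bit0_bits _ (by omega)]
        have e1 : 2 * m / 2 = m := by omega
        have e2 : decide (2 * m % 2 = 1) = false := by simp
        rw [e1, e2]
      · obtain ⟨m, rfl⟩ : ∃ m, n = 2 * m + 1 := ⟨n / 2, by omega⟩
        rw [Nat.bit1_bits]
        have e1 : (2 * m + 1) / 2 = m := by omega
        have e2 : decide ((2 * m + 1) % 2 = 1) = true := by simp [Nat.mul_add_mod]
        rw [e1, e2]

lemma myBits_ne_nil {n : ℕ} (h : 0 < n) : myBits n ≠ [] := by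
  rw [myBits_pos h]; simp

lemma getLast?_myBits {n : ℕ} (h : 0 < n) : (myBits n).getLast? = some true := by
  induction n using Nat.strong_induction_on with
  | _ n ih =>
    rw [myBits_pos h]
    rcases Nat.eq_zero_or_pos (n / 2) with h2 | h2
    · have : n = 1 := by omega
      subst this; simp
    · rw [getLast?_cons_ne (myBits_ne_nil h2)]
      exact ih (n / 2) (Nat.div_lt_self h one_lt_two) h2

lemma ofBits_pos : ∀ {l : List Bool}, l.getLast? = some true → 0 < ofBits l := by
  intro l
  induction l with
  | nil => simp
  | cons b t ih =>
    intro h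
    rcases eq_or_ne t [] with rfl | ht
    · simp at h; subst h; simp
    · rw [getLast?_cons_ne ht] at h
      have := ih h
      simp; omega

lemma myBits_ofBits : ∀ {l : List Bool}, l.getLast? = some true → myBits (ofBits l) = l := by
  intro l
  induction l with
  | nil => simp
  | cons b t ih =>
    intro h
    rcases eq_or_ne t [] with rfl | ht
    · simp at h; subst h
      rw [show ofBits [true] = 1 by simp, myBits_pos (by norm_num)]
      norm_num
    · rw [getLast?_cons_ne ht] at h
      have hpos : 0 < ofBits t := ofBits_pos h
      have hv : 0 < ofBits (b :: t) := by simp; omega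
      rw [myBits_pos hv]
      have h2 : ofBits (b :: t) / 2 = ofBits t := by cases b <;> simp <;> omega
      have h1 : decide (ofBits (b :: t) % 2 = 1) = b := by cases b <;> simp <;> omega
      rw [h1, h2, ih h]

/-- length of the binary representation -/
def L (n : ℕ) : ℕ := (myBits n).length

lemma two_pow_L_le {n : ℕ} (h : 0 < n) : 2 ^ L n ≤ 2 * n := by
  induction n using Nat.strong_induction_on with
  | _ n ih =>
    unfold L
    rw [myBits_pos h]
    rcases Nat.eq_zero_or_pos (n / 2) with h2 | h2
    · have : n = 1 := by omega
      subst this; simp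
    · have := ih (n / 2) (Nat.div_lt_self h one_lt_two) h2
      simp only [List.length_cons, pow_succ]
      unfold L at this
      omega

end Stmt11
namespace Stmt11

/-! ### Transducer data -/

abbrev TData : Type := ℕ × List (ℕ × List Bool)

def entryP (d : TData) (i : ℕ) : ℕ × List Bool :=
  ((d.2.getD i (0, [])).1 % max d.1 1, (d.2.getD i (0, [])).2)

lemma entryP_fst_lt (d : TData) (i : ℕ) : (entryP d i).1 < max d.1 1 :=
  Nat.mod_lt _ (by omega)

def build (d : TData) : Transducer where
  n := max d.1 1
  npos := by omega
  delta := fun j b =>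
    (⟨(entryP d (2 * j.val + cond b 1 0)).1, entryP_fst_lt d _⟩,
      (entryP d (2 * j.val + cond b 1 0)).2)

lemma build_delta (d : TData) (j : Fin (build d).n) (b : Bool) :
    (((build d).delta j b).1.val, ((build d).delta j b).2)
      = entryP d (2 * j.val + cond b 1 0) := rfl

def w (n : ℕ) : List Bool := true :: List.replicate n false

def Fam (m : ℕ) : Transducer where
  n := max m 1
  npos := by omega
  delta := fun j b =>
    match b with
    | false => if j.val = 0 then (j, w m) else (j, [])
    | true => if h : j.val + 1 < max m 1 then (⟨j.val + 1, h⟩, []) else (j, [])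

def encD (T : Transducer) : TData :=
  (T.n, (List.finRange (2 * T.n)).map fun i =>
    ((T.delta ⟨i.val / 2, by have := i.isLt; omega⟩ (decide (i.val % 2 = 1))).1.val,
      (T.delta ⟨i.val / 2, by have := i.isLt; omega⟩ (decide (i.val % 2 = 1))).2))

def canonData (d : TData) : TData :=
  (max d.1 1, (List.range (2 * max d.1 1)).map fun i => entryP d i)

def famD (m : ℕ) : TData :=
  (max m 1, (List.range (2 * max m 1)).map fun i =>
    if i % 2 = 0 then (if i / 2 = 0 then (0, w m) else (i / 2, []))
    else (if i / 2 + 1 < max m 1 then (i / 2 + 1, []) else (i / 2, [])))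

lemma ext' {T₁ T₂ : Transducer} (h : T₁.n = T₂.n)
    (hd : ∀ i b (h₁ : i < T₁.n) (h₂ : i < T₂.n),
      ((T₁.delta ⟨i, h₁⟩ b).1.val, (T₁.delta ⟨i, h₁⟩ b).2)
        = ((T₂.delta ⟨i, h₂⟩ b).1.val, (T₂.delta ⟨i, h₂⟩ b).2)) : T₁ = T₂ := by
  obtain ⟨n₁, p₁, d₁⟩ := T₁
  obtain ⟨n₂, p₂, d₂⟩ := T₂
  dsimp at h hd
  subst h
  simp only [Transducer.mk.injEq, heq_eq_eq, true_and]
  funext j b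
  have := hd j.val b j.isLt j.isLt
  simp only [Fin.eta] at this
  injection this with h1 h2
  exact Prod.ext (Fin.ext h1) h2

lemma delta_comps_congr (T : Transducer) (j j' : Fin T.n) (c c' : Bool)
    (hj : j.val = j'.val) (hc : c = c') :
    ((T.delta j c).1.val, (T.delta j c).2) = ((T.delta j' c').1.val, (T.delta j' c').2) := by
  subst hc; rw [Fin.ext hj]

lemma encD_fst (T : Transducer) : (encD T).1 = T.n := rfl

lemma encD_snd_getD (T : Transducer) {i : ℕ} (h : i < 2 * T.n) :
    (encD T).2.getD i (0, []) =
      ((T.delta ⟨i / 2, by omega⟩ (decide (i % 2 = 1))).1.val,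
        (T.delta ⟨i / 2, by omega⟩ (decide (i % 2 = 1))).2) := by
  have hl : i < ((encD T).2).length := by simp [encD]; omega
  rw [List.getD_eq_getElem _ _ hl]
  simp only [encD, List.getElem_map, List.getElem_finRange, Fin.cast_mk]

lemma entryP_encD (T : Transducer) {i : ℕ} (h : i < 2 * T.n) :
    entryP (encD T) i =
      ((T.delta ⟨i / 2, by omega⟩ (decide (i % 2 = 1))).1.val,
        (T.delta ⟨i / 2, by omega⟩ (decide (i % 2 = 1))).2) := by
  unfold entryP
  rw [encD_snd_getD T h]
  have hmax : max (encD T).1 1 = T.n := by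
    have := T.npos; rw [encD_fst]; omega
  rw [hmax]
  exact Prod.ext (Nat.mod_eq_of_lt (Fin.isLt _)) rfl

lemma build_encD (T : Transducer) : build (encD T) = T := by
  apply ext'
  · have := T.npos
    show max (encD T).1 1 = T.n
    rw [encD_fst]; omega
  · intro i b h₁ h₂
    rw [build_delta]
    have hk : 2 * i + cond b 1 0 < 2 * T.n := by cases b <;> simp <;> omega
    rw [entryP_encD T hk]
    exact delta_comps_congr T _ _ _ _ (by cases b <;> simp <;> omega)
      (by cases b <;> simp <;> omega)

lemma canonData_eq (d : TData) : canonData d = encD (build d) := by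
  unfold canonData encD
  apply Prod.ext
  · rfl
  · show _ = (List.finRange (2 * (build d).n)).map _
    have hn : (build d).n = max d.1 1 := rfl
    apply List.ext_getElem
    · simp [hn]
    · intro i hi₁ hi₂
      simp only [List.getElem_map, List.getElem_range, List.getElem_finRange, Fin.cast_mk]
      have hi : i < 2 * max d.1 1 := by simpa using hi₁
      rw [build_delta]
      have : 2 * (i / 2) + cond (decide (i % 2 = 1)) 1 0 = i := by
        rcases Nat.mod_two_eq_zero_or_one i with h2 | h2 <;> simp [h2] <;> omega
      rw [this]

end Stmt11
namespace Stmt11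

lemma famD_eq (m : ℕ) : famD m = encD (Fam m) := by
  unfold famD encD
  apply Prod.ext
  · rfl
  · apply List.ext_getElem
    · simp [Fam]
    · intro i hi₁ hi₂
      simp only [List.getElem_map, List.getElem_range, List.getElem_finRange, Fin.cast_mk]
      have hi : i < 2 * max m 1 := by simpa using hi₁
      rcases Nat.mod_two_eq_zero_or_one i with h2 | h2
      · have hb : decide (i % 2 = 1) = false := by simp [h2]
        rw [hb]
        by_cases h3 : i / 2 = 0 <;> simp [Fam, h3, h2]
      · have hb : decide (i % 2 = 1) = true := by simp [h2]
        rw [hb]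
        by_cases h3 : i / 2 + 1 < max m 1 <;> simp [Fam, h3, h2]

lemma build_famD (m : ℕ) : build (famD m) = Fam m := by
  rw [famD_eq, build_encD]

lemma canonData_famD (m : ℕ) : canonData (famD m) = famD m := by
  rw [famD_eq, canonData_eq, build_encD]

lemma canonData_encD (T : Transducer) : canonData (encD T) = encD T := by
  rw [canonData_eq, build_encD]

lemma Fam_n {m : ℕ} (h : 0 < m) : (Fam m).n = m := max_eq_left h

/-! ### Output lemmas -/

def sumOut (d : TData) : ℕ := (d.2.map fun x => x.2.length).sum

lemma entryP_snd_len_le (d : TData) (i : ℕ) : (entryP d i).2.length ≤ sumOut d := by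
  unfold entryP sumOut
  show (d.2.getD i (0, [])).2.length ≤ _
  rcases lt_or_ge i d.2.length with h | h
  · rw [List.getD_eq_getElem _ _ h]
    exact List.single_le_sum (by simp) _ (List.mem_map_of_mem (List.getElem_mem _))
  · rw [List.getD_eq_default _ _ h]; simp

lemma run_len_le (d : TData) : ∀ (p : List Bool) (q : Fin (build d).n),
    ((build d).run q p).2.length ≤ p.length * (sumOut d + 1) := by
  intro p
  induction p with
  | nil => intro q; simp [Transducer.run]
  | cons a x ih =>
    intro q
    have hstep : ((build d).delta q a).2.length ≤ sumOut d := by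
      have : ((build d).delta q a).2 = (entryP d (2 * q.val + cond a 1 0)).2 :=
        congrArg Prod.snd (build_delta d q a)
      rw [this]; exact entryP_snd_len_le d _
    have hrest := ih (((build d).delta q a).1)
    simp only [Transducer.run, List.length_append, List.length_cons]
    have : (x.length + 1) * (sumOut d + 1) = x.length * (sumOut d + 1) + (sumOut d + 1) := by
      ring
    omega

lemma Fam_run_pow (m : ℕ) : ∀ (p : List Bool) (q : Fin (Fam m).n),
    ∃ k, ((Fam m).run q p).2 = (List.replicate k (w m)).flatten := by
  intro p
  induction p with
  | nil => exact fun q => ⟨0, by simp [Transducer.run]⟩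
  | cons a x ih =>
    intro q
    obtain ⟨k, hk⟩ := ih (((Fam m).delta q a).1)
    cases a
    · by_cases h0 : q.val = 0
      · refine ⟨k + 1, ?_⟩
        have hδ : (Fam m).delta q false = (q, w m) := by simp [Fam, h0]
        simp [Transducer.run, hδ, hk, List.replicate_succ]
        rw [show ((Fam m).delta q false).1 = q from by rw [hδ]] at hk
        simp [hk]
      · refine ⟨k, ?_⟩
        have hδ : (Fam m).delta q false = (q, []) := by simp [Fam, h0]
        simp only [Transducer.run, hδ]
        rw [show ((Fam m).delta q false).1 = q from by rw [hδ]] at hk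
        simpa using hk
    · refine ⟨k, ?_⟩
      have hδ : ((Fam m).delta q true).2 = [] := by
        show ((if h : q.val + 1 < max m 1 then ((⟨q.val + 1, h⟩ : Fin (max m 1)), ([] : List Bool)) else (q, [])) : Fin (max m 1) × List Bool).2 = []
        split <;> rfl
      simp only [Transducer.run, hδ, List.nil_append]
      exact hk

lemma count_flatten_replicate (k : ℕ) (l : List Bool) (a : Bool) :
    ((List.replicate k l).flatten).count a = k * l.count a := by
  induction k with
  | zero => simp
  | succ k ih =>
    simp [List.replicate_succ, ih]
    ring

lemma w_count (m : ℕ) : (w m).count true = 1 := by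
  simp [w, List.count_replicate]

lemma w_pow {k m n : ℕ} (h : (List.replicate k (w m)).flatten = w n) : k = 1 ∧ m = n := by
  have hc := congrArg (List.count true) h
  rw [count_flatten_replicate, w_count, w_count, mul_one] at hc
  subst hc
  have : w m = w n := by simpa using h
  have hm := congrArg List.length this
  simp [w] at hm
  exact ⟨rfl, hm⟩

lemma Fam_output_pow (m : ℕ) (p : List Bool) :
    ∃ k, (Fam m).output p = (List.replicate k (w m)).flatten :=
  Fam_run_pow m p _

lemma Fam_output_false (m : ℕ) : (Fam m).output [false] = w m := by
  simp [Transducer.output, Transducer.run, Fam, Transducer.start]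

/-! ### stdEnc of built transducers -/

def encTD (j : ℕ) (t : ℕ × List Bool) : List Bool :=
  (if t.1 = j then [] else dagger (binRep (t.1 + 1))) ++ diamond t.2

def stdEncD (d : TData) : List Bool :=
  (List.range (max d.1 1)).flatMap fun j =>
    encTD j (entryP d (2 * j)) ++ encTD j (entryP d (2 * j + 1))

lemma flatMap_finRange {α : Type*} (k : ℕ) (F : Fin k → List α) (G : ℕ → List α)
    (h : ∀ i : Fin k, F i = G i.val) :
    (List.finRange k).flatMap F = (List.range k).flatMap G := by
  have key : ∀ l : List (Fin k), l.flatMap F = (l.map Fin.val).flatMap G := by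
    intro l
    induction l with
    | nil => simp
    | cons a t ih => simp [ih, h a]
  rw [key, show (List.finRange k).map Fin.val = List.range k from
    List.ext_getElem (by simp) (by simp)]

lemma stdEnc_build (d : TData) : stdEnc (build d) = stdEncD d := by
  unfold stdEnc stdEncD
  apply flatMap_finRange
  intro j
  have e : ∀ b : Bool, encTransition j ((build d).delta j b)
      = encTD j.val (entryP d (2 * j.val + cond b 1 0)) := by
    intro b
    have h1 : ((build d).delta j b).1.val = (entryP d (2 * j.val + cond b 1 0)).1 :=
      congrArg Prod.fst (build_delta d j b)
    have h2 : ((build d).delta j b).2 = (entryP d (2 * j.val + cond b 1 0)).2 :=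
      congrArg Prod.snd (build_delta d j b)
    unfold encTransition encTD
    rw [h2]
    congr 1
    simp only [Fin.ext_iff, h1]
  have := e false
  simp only [cond_false, Nat.add_zero] at this
  rw [this, e true]
  rfl

end Stmt11
namespace Stmt11

/-! ### The decoding function -/

def decodeT : List Bool → Option Transducer
  | [] => none
  | true :: τ => if τ.getLast? = some true then some (Fam (ofBits τ)) else none
  | false :: τ =>
    if τ = List.replicate τ.length true then
      ((Encodable.decode ((τ.length - 8) / 3) : Option TData)).bind fun d =>
        if d = canonData d ∧ d ≠ famD d.1 ∧ τ.length = 3 * Encodable.encode d + 8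
        then some (build d) else none
    else none

lemma decodeT_nil : decodeT [] = none := rfl

lemma decodeT_false (τ : List Bool) : decodeT (false :: τ) =
    (if τ = List.replicate τ.length true then
      ((Encodable.decode ((τ.length - 8) / 3) : Option TData)).bind fun d =>
        if d = canonData d ∧ d ≠ famD d.1 ∧ τ.length = 3 * Encodable.encode d + 8
        then some (build d) else none
    else none) := rfl

lemma decodeT_true_some {τ : List Bool} {T : Transducer}
    (h : decodeT (true :: τ) = some T) :
    τ.getLast? = some true ∧ T = Fam (ofBits τ) := by
  simp only [decodeT] at h
  split at h
  · exact ⟨by assumption, (Option.some_injective _ h).symm⟩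
  · exact absurd h (by simp)

lemma decodeT_false_some {τ : List Bool} {T : Transducer}
    (h : decodeT (false :: τ) = some T) :
    ∃ d : TData, τ = List.replicate τ.length true ∧
      Encodable.decode ((τ.length - 8) / 3) = some d ∧
      d = canonData d ∧ d ≠ famD d.1 ∧ τ.length = 3 * Encodable.encode d + 8 ∧
      T = build d := by
  rw [decodeT_false] at h
  split at h
  case isTrue hrep =>
    obtain ⟨d, hd, hf⟩ := Option.bind_eq_some_iff.mp h
    split at hf
    case isTrue hcond =>
      exact ⟨d, hrep, hd, hcond.1, hcond.2.1, hcond.2.2,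
        (Option.some_injective _ hf).symm⟩
    · exact absurd hf (by simp)
  · exact absurd h (by simp)

lemma build_eq_Fam {d : TData} (hc : d = canonData d) {m : ℕ} (hm : 0 < m)
    (h : build d = Fam m) : d = famD d.1 := by
  have hd : d = encD (Fam m) := by rw [hc, canonData_eq, h]
  have h1 : (encD (Fam m)).1 = m := by rw [encD_fst, Fam_n hm]
  rw [hd, h1, ← famD_eq]

lemma decodeT_inj {σ₁ σ₂ : List Bool} {T : Transducer}
    (h₁ : decodeT σ₁ = some T) (h₂ : decodeT σ₂ = some T) : σ₁ = σ₂ := by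
  match σ₁, σ₂ with
  | [], _ => simp [decodeT_nil] at h₁
  | _, [] => simp [decodeT_nil] at h₂
  | true :: τ₁, true :: τ₂ =>
    obtain ⟨hg₁, rfl⟩ := decodeT_true_some h₁
    obtain ⟨hg₂, he⟩ := decodeT_true_some h₂
    have hm₁ : 0 < ofBits τ₁ := ofBits_pos hg₁
    have hm₂ : 0 < ofBits τ₂ := ofBits_pos hg₂
    have hn : (Fam (ofBits τ₁)).n = (Fam (ofBits τ₂)).n := by rw [he]
    rw [Fam_n hm₁, Fam_n hm₂] at hn
    rw [show τ₁ = myBits (ofBits τ₁) from (myBits_ofBits hg₁).symm,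
      show τ₂ = myBits (ofBits τ₂) from (myBits_ofBits hg₂).symm, hn]
  | true :: τ₁, false :: τ₂ =>
    obtain ⟨hg₁, rfl⟩ := decodeT_true_some h₁
    obtain ⟨d, _, _, hc, hne, _, he⟩ := decodeT_false_some h₂
    exact absurd (build_eq_Fam hc (ofBits_pos hg₁) he.symm) hne
  | false :: τ₁, true :: τ₂ =>
    obtain ⟨hg₂, rfl⟩ := decodeT_true_some h₂
    obtain ⟨d, _, _, hc, hne, _, he⟩ := decodeT_false_some h₁
    exact absurd (build_eq_Fam hc (ofBits_pos hg₂) he.symm) hne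
  | false :: τ₁, false :: τ₂ =>
    obtain ⟨d₁, hrep₁, _, hc₁, _, hlen₁, he₁⟩ := decodeT_false_some h₁
    obtain ⟨d₂, hrep₂, _, hc₂, _, hlen₂, he₂⟩ := decodeT_false_some h₂
    have hd : d₁ = d₂ := by
      rw [hc₁, hc₂, canonData_eq, canonData_eq, ← he₁, ← he₂]
    subst hd
    have hτlen : τ₁.length = τ₂.length := by omega
    rw [hrep₁, hrep₂, hτlen]

lemma decodeT_code_true (m : ℕ) (hm : 0 < m) :
    decodeT (true :: myBits m) = some (Fam m) := by
  simp only [decodeT]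
  rw [if_pos (getLast?_myBits hm), ofBits_myBits]

lemma decodeT_surj (T : Transducer) : ∃ σ, decodeT σ = some T := by
  by_cases hfam : ∃ m, 0 < m ∧ T = Fam m
  · obtain ⟨m, hm, rfl⟩ := hfam
    exact ⟨true :: myBits m, decodeT_code_true m hm⟩
  · refine ⟨false :: List.replicate (3 * Encodable.encode (encD T) + 8) true, ?_⟩
    rw [decodeT_false]
    rw [if_pos (by rw [List.length_replicate])]
    rw [List.length_replicate]
    have hdec : (Encodable.decode ((3 * Encodable.encode (encD T) + 8 - 8) / 3) :
        Option TData) = some (encD T) := by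
      rw [show (3 * Encodable.encode (encD T) + 8 - 8) / 3 = Encodable.encode (encD T)
        from by omega]
      exact Encodable.encodek _
    rw [hdec, Option.bind_some]
    have hcond : encD T = canonData (encD T) ∧ encD T ≠ famD (encD T).1 ∧
        3 * Encodable.encode (encD T) + 8 = 3 * Encodable.encode (encD T) + 8 := by
      refine ⟨(canonData_encD T).symm, ?_, rfl⟩
      intro hfd
      apply hfam
      refine ⟨T.n, T.npos, ?_⟩
      conv_lhs => rw [← build_encD T]
      rw [hfd, encD_fst, build_famD]
    rw [if_pos hcond, build_encD]

/-! ### Bounds on encodings -/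

lemma encode_listBool_ge (l : List Bool) : l.length ≤ Encodable.encode l := by
  induction l with
  | nil => simp
  | cons b t ih =>
    rw [Encodable.encode_list_cons]
    have := Nat.right_le_pair (Encodable.encode b) (Encodable.encode t)
    simp only [List.length_cons]
    omega

lemma encode_ge_sumOut (d : TData) : sumOut d ≤ Encodable.encode d := by
  have h2 : sumOut d ≤ Encodable.encode d.2 := by
    unfold sumOut
    induction d.2 with
    | nil => simp
    | cons x t ih =>
      rw [Encodable.encode_list_cons]
      have hx : x.2.length ≤ Encodable.encode x := by
        have h1 : Encodable.encode x = Nat.pair (Encodable.encode x.1) (Encodable.encode x.2) := by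
          rw [← Encodable.encode_prod_val]
        have := Nat.right_le_pair (Encodable.encode x.1) (Encodable.encode x.2)
        have := encode_listBool_ge x.2
        omega
      have hp := Nat.add_le_pair (Encodable.encode x) (Encodable.encode t)
      simp only [List.map_cons, List.sum_cons]
      omega
  have h3 : Encodable.encode d = Nat.pair (Encodable.encode d.1) (Encodable.encode d.2) := by
    rw [← Encodable.encode_prod_val]
  have := Nat.right_le_pair (Encodable.encode d.1) (Encodable.encode d.2)
  omega

lemma le_two_pow_pred {x : ℕ} (h : 1 ≤ x) : x ≤ 2 ^ (x - 1) := by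
  have := Nat.lt_two_pow_self (n := x - 1)
  omega

end Stmt11
namespace Stmt11

/-! ### Primitive recursiveness -/

open Primrec in
lemma primrec_myBits : Primrec myBits := by
  have hg : Primrec₂ (fun (_ : Unit) (l : List (List Bool)) =>
      if l.length = 0 then some ([] : List Bool)
      else (l[l.length / 2]?).map fun r => (decide (l.length % 2 = 1)) :: r) := by
    refine Primrec.ite ?_ (const _) ?_
    · exact PrimrecRel.comp Primrec.eq (list_length.comp snd) (const 0)
    · refine option_map (list_getElem?.comp snd
        (nat_div.comp (list_length.comp snd) (const 2))) ?_
      refine list_cons.comp₂ ?_ Primrec₂.right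
      exact (PrimrecRel.comp Primrec.eq
        (nat_mod.comp (list_length.comp (snd.comp fst)) (const 2)) (const 1)).decide
  have H : ∀ (_ : Unit) (n : ℕ),
      (fun (_ : Unit) (l : List (List Bool)) =>
        if l.length = 0 then some ([] : List Bool)
        else (l[l.length / 2]?).map fun r => (decide (l.length % 2 = 1)) :: r) ()
          ((List.range n).map myBits) = some (myBits n) := by
    intro _ n
    dsimp only
    rcases Nat.eq_zero_or_pos n with rfl | hn
    · simp
    · have hlt : n / 2 < n := Nat.div_lt_self hn one_lt_two
      have hne : ¬((List.range n).map myBits).length = 0 := by simp; omega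
      rw [if_neg hne]
      rw [List.getElem?_map, List.getElem?_range (by simpa using hlt)]
      simp only [List.length_map, List.length_range, Option.map_some]
      rw [← myBits_pos hn]
  have := Primrec.nat_strong_rec (fun (_ : Unit) n => myBits n) hg H
  exact this.comp (const ()) Primrec.id

open Primrec in
lemma primrec_binRep : Primrec binRep :=
  (list_reverse.comp primrec_myBits).of_eq fun n => by
    rw [binRep, bits_eq_myBits]

lemma dagger_eq (v : List Bool) : dagger v =
    if v = [] then [] else (v.flatMap fun a => [a, false]).dropLast ++ [true] := by
  induction v with
  | nil => rfl
  | cons a t ih =>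
    cases t with
    | nil => rfl
    | cons b u =>
      rw [show dagger (a :: b :: u) = a :: false :: dagger (b :: u) from rfl, ih]
      simp [List.flatMap_cons]

lemma dropLast_eq_rev (l : List Bool) : l.dropLast = l.reverse.tail.reverse := by
  rw [List.tail_reverse, List.reverse_reverse]

open Primrec in
lemma primrec_dagger : Primrec dagger := by
  have h : Primrec fun v : List Bool =>
      if v = [] then ([] : List Bool)
      else ((v.flatMap fun a => [a, false]).reverse.tail.reverse ++ [true]) := by
    refine Primrec.ite (PrimrecRel.comp Primrec.eq Primrec.id (const [])) (const []) ?_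
    refine list_append.comp ?_ (const [true])
    refine list_reverse.comp (list_tail.comp (list_reverse.comp ?_))
    exact list_flatMap Primrec.id
      (list_cons.comp₂ Primrec₂.right (const [false]))
  exact h.of_eq fun v => by rw [dagger_eq, dropLast_eq_rev]

open Primrec in
lemma primrec_diamond : Primrec diamond := by
  have h : Primrec fun v : List Bool => (dagger (true :: v)).map (! ·) :=
    list_map (primrec_dagger.comp (list_cons.comp (const true) Primrec.id))
      ((dom_bool (! ·)).comp snd)
  exact h.of_eq fun v => rfl

open Primrec in
lemma primrec_max1 : Primrec (fun a : ℕ => max a 1) :=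
  nat_max.comp Primrec.id (const 1)

open Primrec in
lemma primrec_replicate (b : Bool) : Primrec fun m : ℕ => List.replicate m b := by
  have h : Primrec fun m : ℕ => (List.range m).map fun _ => b :=
    list_map list_range ((const b).comp fst)
  exact h.of_eq fun m => by
    rw [List.map_const', List.length_range]

open Primrec in
lemma primrec_w : Primrec w :=
  list_cons.comp (const true) (primrec_replicate false)

open Primrec in
lemma primrec_entryP : Primrec₂ entryP := by
  have hget : Primrec fun p : TData × ℕ => p.1.2.getD p.2 ((0, []) : ℕ × List Bool) :=
    (list_getD ((0, []) : ℕ × List Bool)).comp (snd.comp fst) snd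
  refine Primrec.pair ?_ ?_
  · exact nat_mod.comp (fst.comp hget) (primrec_max1.comp (fst.comp fst))
  · exact snd.comp hget

open Primrec in
lemma primrec_encTD : Primrec₂ encTD := by
  unfold encTD
  refine list_append.comp ?_ (primrec_diamond.comp (snd.comp snd))
  refine Primrec.ite (PrimrecRel.comp Primrec.eq (fst.comp snd) fst) (const []) ?_
  exact primrec_dagger.comp (primrec_binRep.comp (succ.comp (fst.comp snd)))

open Primrec in
lemma primrec_stdEncD : Primrec stdEncD := by
  unfold stdEncD
  refine list_flatMap (list_range.comp (primrec_max1.comp fst)) ?_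
  refine list_append.comp ?_ ?_
  · exact primrec_encTD.comp snd
      (primrec_entryP.comp fst (nat_mul.comp (const 2) snd))
  · exact primrec_encTD.comp snd
      (primrec_entryP.comp fst (succ.comp (nat_mul.comp (const 2) snd)))

open Primrec in
lemma primrec_canonData : Primrec canonData := by
  unfold canonData
  refine Primrec.pair (primrec_max1.comp fst) ?_
  exact list_map (list_range.comp (nat_mul.comp (const 2) (primrec_max1.comp fst)))
    primrec_entryP

open Primrec in
lemma primrec_famD : Primrec famD := by
  unfold famD
  refine Primrec.pair (primrec_max1.comp Primrec.id) ?_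
  refine list_map (list_range.comp (nat_mul.comp (const 2) (primrec_max1.comp Primrec.id))) ?_
  have hdiv : Primrec fun p : ℕ × ℕ => p.2 / 2 := nat_div.comp snd (const 2)
  refine Primrec.ite (PrimrecRel.comp Primrec.eq (nat_mod.comp snd (const 2)) (const 0)) ?_ ?_
  · refine Primrec.ite (PrimrecRel.comp Primrec.eq hdiv (const 0)) ?_ ?_
    · exact (Primrec.pair (const 0) primrec_w).comp fst
    · exact Primrec.pair hdiv (const [])
  · refine Primrec.ite (PrimrecRel.comp Primrec.nat_lt (succ.comp hdiv)
      (primrec_max1.comp fst)) ?_ ?_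
    · exact Primrec.pair (succ.comp hdiv) (const [])
    · exact Primrec.pair hdiv (const [])

open Primrec in
lemma primrec_ofBits : Primrec ofBits := by
  have hh : Primrec₂ fun (_ : List Bool) (p : Bool × ℕ) => cond p.1 1 0 + 2 * p.2 :=
    nat_add.comp (Primrec.cond (fst.comp snd) (const 1) (const 0))
      (nat_mul.comp (const 2) (snd.comp snd))
  exact (list_foldr Primrec.id (const 0) hh).of_eq fun l => rfl

end Stmt11
namespace Stmt11

/-! ### The key cost estimate -/

lemma cost_cases {n : ℕ} (hn : 0 < n) {σ p : List Bool} {T : Transducer}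
    (hdec : decodeT σ = some T) (hout : T.output p = w n) :
    (σ = true :: myBits n ∧ T = Fam n ∧ 1 ≤ p.length) ∨
      L n + 9 ≤ σ.length + p.length := by
  match σ with
  | [] => simp [decodeT_nil] at hdec
  | true :: τ =>
    left
    obtain ⟨hg, rfl⟩ := decodeT_true_some hdec
    obtain ⟨k, hk⟩ := Fam_output_pow (ofBits τ) p
    rw [hout] at hk
    obtain ⟨hk1, hmn⟩ := w_pow hk.symm
    have hτ : τ = myBits n := by
      rw [show τ = myBits (ofBits τ) from (myBits_ofBits hg).symm, hmn]
    have hp : p ≠ [] := by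
      rintro rfl
      have : (Fam (ofBits τ)).output [] = [] := rfl
      rw [hout] at this
      exact absurd this (by simp [w])
    refine ⟨by rw [hτ], by rw [hmn], ?_⟩
    have := List.length_pos_iff.mpr hp
    omega
  | false :: τ =>
    right
    obtain ⟨d, hrep, hdec2, hc, hne, hlen, rfl⟩ := decodeT_false_some hdec
    have hse : sumOut d ≤ Encodable.encode d := encode_ge_sumOut d
    have hrun : ((build d).run (build d).start p).2.length ≤ p.length * (sumOut d + 1) :=
      run_len_le d p _
    have hout' : n + 1 ≤ p.length * (sumOut d + 1) := by
      have := congrArg List.length hout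
      rw [Transducer.output] at this
      simp only [w, List.length_cons, List.length_replicate] at this
      omega
    have hp : 1 ≤ p.length := by
      rcases Nat.eq_zero_or_pos p.length with h0 | h0
      · rw [h0, zero_mul] at hout'; omega
      · exact h0
    have hL : L n ≤ sumOut d + p.length := by
      have h1 : 2 ^ L n ≤ 2 * n := two_pow_L_le hn
      have h2 : sumOut d + 1 ≤ 2 ^ sumOut d := Nat.lt_two_pow_self
      have h3 : p.length ≤ 2 ^ (p.length - 1) := le_two_pow_pred hp
      have key : 2 ^ L n ≤ 2 ^ (sumOut d + p.length) := by
        have hm : p.length * (sumOut d + 1) ≤ 2 ^ (p.length - 1) * 2 ^ sumOut d :=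
          Nat.mul_le_mul h3 h2
        have he : 2 * (2 ^ (p.length - 1) * 2 ^ sumOut d) = 2 ^ (sumOut d + p.length) := by
          rw [← pow_add, ← pow_succ']
          congr 1
          omega
        calc 2 ^ L n ≤ 2 * n := h1
          _ ≤ 2 * (p.length * (sumOut d + 1)) := by omega
          _ ≤ 2 * (2 ^ (p.length - 1) * 2 ^ sumOut d) := by omega
          _ = 2 ^ (sumOut d + p.length) := he
      exact (Nat.pow_le_pow_iff_right one_lt_two).mp key
    have hσ : (false :: τ).length = 3 * Encodable.encode d + 9 := by
      simp only [List.length_cons]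
      omega
    omega

end Stmt11
namespace Stmt11

/-! ### The computable companion function -/

def gFun (σ : List Bool) : Option (List Bool) :=
  σ.head?.bind fun b =>
    bif b then
      (if σ.tail.getLast? = some true then some (stdEncD (famD (ofBits σ.tail))) else none)
    else
      (if σ.tail = List.replicate σ.tail.length true then
        ((Encodable.decode ((σ.tail.length - 8) / 3) : Option TData)).bind fun d =>
          (if d = canonData d ∧ d ≠ famD d.1 ∧ σ.tail.length = 3 * Encodable.encode d + 8
          then some (stdEncD d) else none)
      else none)

lemma stdEnc_Fam (m : ℕ) : stdEnc (Fam m) = stdEncD (famD m) := by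
  rw [← build_famD, stdEnc_build]

lemma gFun_eq (σ : List Bool) : (decodeT σ).map stdEnc = gFun σ := by
  match σ with
  | [] => rfl
  | true :: τ =>
    rw [show decodeT (true :: τ)
      = if τ.getLast? = some true then some (Fam (ofBits τ)) else none from rfl]
    unfold gFun
    simp only [List.head?_cons, Option.bind_some, List.tail_cons, Bool.cond_true]
    show _ = (if τ.getLast? = some true then _ else _)
    by_cases h : τ.getLast? = some true
    · rw [if_pos h, if_pos h, Option.map_some, stdEnc_Fam]
    · rw [if_neg h, if_neg h, Option.map_none]
  | false :: τ =>
    rw [decodeT_false]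
    unfold gFun
    simp only [List.head?_cons, Option.bind_some, List.tail_cons, Bool.cond_false]
    show _ = (if τ = List.replicate τ.length true then _ else _)
    by_cases h : τ = List.replicate τ.length true
    · rw [if_pos h, if_pos h]
      cases hdec : (Encodable.decode ((τ.length - 8) / 3) : Option TData) with
      | none => rw [Option.bind_none, Option.bind_none, Option.map_none]
      | some d =>
        rw [Option.bind_some, Option.bind_some]
        show _ = (if d = canonData d ∧ d ≠ famD d.1 ∧ τ.length = 3 * Encodable.encode d + 8 then _ else _)
        by_cases hc : d = canonData d ∧ d ≠ famD d.1 ∧ τ.length = 3 * Encodable.encode d + 8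
        · rw [if_pos hc, if_pos hc, Option.map_some, stdEnc_build]
        · rw [if_neg hc, if_neg hc, Option.map_none]
    · rw [if_neg h, if_neg h, Option.map_none]

open Primrec in
lemma primrec_getLast? : Primrec (fun τ : List Bool => τ.getLast?) :=
  (list_head?.comp list_reverse).of_eq fun l => List.head?_reverse

open Primrec in
lemma computable_gFun : Computable gFun := by
  have hT : Primrec (fun τ : List Bool =>
      if τ.getLast? = some true then some (stdEncD (famD (ofBits τ))) else none) := by
    refine Primrec.ite (PrimrecRel.comp Primrec.eq primrec_getLast? (const (some true))) ?_
      (const none)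
    exact option_some.comp (primrec_stdEncD.comp (primrec_famD.comp primrec_ofBits))
  have hFinner : Primrec₂ (fun (τ : List Bool) (d : TData) =>
      if d = canonData d ∧ d ≠ famD d.1 ∧ τ.length = 3 * Encodable.encode d + 8
      then some (stdEncD d) else none) := by
    refine Primrec.ite ?_ (option_some.comp (primrec_stdEncD.comp snd)) (const none)
    refine PrimrecPred.and ?_ (PrimrecPred.and ?_ ?_)
    · exact PrimrecRel.comp Primrec.eq snd (primrec_canonData.comp snd)
    · exact (PrimrecRel.comp Primrec.eq snd (primrec_famD.comp (fst.comp snd))).not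
    · exact PrimrecRel.comp Primrec.eq (list_length.comp fst)
        (nat_add.comp (nat_mul.comp (const 3) (Primrec.encode.comp snd)) (const 8))
  have hF : Computable (fun τ : List Bool =>
      if τ = List.replicate τ.length true then
        ((Encodable.decode ((τ.length - 8) / 3) : Option TData)).bind fun d =>
          (if d = canonData d ∧ d ≠ famD d.1 ∧ τ.length = 3 * Encodable.encode d + 8
          then some (stdEncD d) else none)
      else none) := by
    have hb : Computable (fun τ : List Bool =>
        ((Encodable.decode ((τ.length - 8) / 3) : Option TData)).bind fun d =>
          (if d = canonData d ∧ d ≠ famD d.1 ∧ τ.length = 3 * Encodable.encode d + 8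
          then some (stdEncD d) else none)) :=
      Computable.option_bind
        (Computable.decode.comp
          ((nat_div.comp (nat_sub.comp list_length (const 8)) (const 3)).to_comp))
        hFinner.to_comp
    have hc : Computable (fun τ : List Bool =>
        decide (τ = List.replicate τ.length true)) :=
      (PrimrecRel.comp Primrec.eq Primrec.id
        ((primrec_replicate true).comp list_length)).decide.to_comp
    exact (Computable.cond hc hb (Computable.const none)).of_eq fun τ => by
      rw [Bool.cond_decide]
  have hinner : Computable₂ (fun (σ : List Bool) (b : Bool) =>
      bif b then
        (if σ.tail.getLast? = some true then some (stdEncD (famD (ofBits σ.tail))) else none)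
      else
        (if σ.tail = List.replicate σ.tail.length true then
          ((Encodable.decode ((σ.tail.length - 8) / 3) : Option TData)).bind fun d =>
            (if d = canonData d ∧ d ≠ famD d.1 ∧ σ.tail.length = 3 * Encodable.encode d + 8
            then some (stdEncD d) else none)
        else none)) := by
    refine Computable.cond Computable.snd ?_ ?_
    · exact ((hT.comp list_tail).comp fst).to_comp
    · exact hF.comp ((list_tail.to_comp).comp Computable.fst)
  exact Computable.option_bind (list_head?.to_comp) hinner

lemma computable_decode_map : Computable fun σ => (decodeT σ).map stdEnc :=
  computable_gFun.of_eq fun σ => (gFun_eq σ).symm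

/-! ### The encoding `S1` -/

def S1 : CompEncoding where
  D := {σ | (decodeT σ).isSome}
  dec := by
    refine ⟨fun σ => inferInstanceAs (Decidable ((decodeT σ).isSome = true)), ?_⟩
    have h : Computable fun σ => ((decodeT σ).map stdEnc).isSome :=
      Primrec.option_isSome.to_comp.comp computable_decode_map
    exact h.of_eq fun σ => by simp
  decode := decodeT
  decode_dom := fun σ => Iff.rfl
  decode_inj := by
    intro σ₁ h₁ σ₂ h₂ heq
    obtain ⟨T, hT⟩ := Option.isSome_iff_exists.mp h₁
    exact decodeT_inj hT (heq ▸ hT)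
  decode_surj := decodeT_surj
  decode_comp := computable_decode_map

lemma S1_decode : S1.decode = decodeT := rfl

lemma C_wn {n : ℕ} (hn : 0 < n) : S1.C (w n) = L n + 2 := by
  have hmem : (L n + 2) ∈ S1.sizes (w n) := by
    refine ⟨true :: myBits n, Fam n, [false], decodeT_code_true n hn,
      Fam_output_false n, ?_⟩
    simp [L]
  have hlb : ∀ c ∈ S1.sizes (w n), L n + 2 ≤ c := by
    rintro c ⟨σ, T, p, hdec, hout, rfl⟩
    rcases cost_cases hn hdec hout with ⟨rfl, rfl, hp⟩ | h
    · simp [L]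
      omega
    · omega
  exact le_antisymm (Nat.sInf_le hmem) (hlb _ (Nat.sInf_mem ⟨_, hmem⟩))

lemma mem_Lle {n : ℕ} (hn : 0 < n) : w n ∈ S1.Lle n := by
  refine ⟨true :: myBits n, Fam n, [false], decodeT_code_true n hn,
    Fam_output_false n, ?_, ?_⟩
  · rw [C_wn hn]
    simp [L]
  · show (Fam n).n ≤ n
    rw [Fam_n hn]

lemma not_mem_Lle {n : ℕ} (hn : 0 < n) : w n ∉ S1.Lle (n - 1) := by
  rintro ⟨σ, T, p, hdec, hout, hcost, hsize⟩
  rw [C_wn hn] at hcost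
  rcases cost_cases hn hdec hout with ⟨rfl, rfl, hp⟩ | h
  · have : (Fam n).n ≤ n - 1 := hsize
    rw [Fam_n hn] at this
    omega
  · omega

end Stmt11

theorem stmt11 : ∃ S : CompEncoding, ∀ n : ℕ, 1 ≤ n → S.Lle (n - 1) ⊂ S.Lle n := by
  refine ⟨Stmt11.S1, fun n hn => ?_⟩
  have hmono : Stmt11.S1.Lle (n - 1) ⊆ Stmt11.S1.Lle n := by
    rintro x ⟨σ, T, p, h1, h2, h3, h4⟩
    exact ⟨σ, T, p, h1, h2, h3, h4.trans (by omega)⟩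
  rw [Set.ssubset_iff_of_subset hmono]
  exact ⟨Stmt11.w n, Stmt11.mem_Lle (by omega), Stmt11.not_mem_Lle (by omega)⟩
end

section
/- With respect to the encoding S₁, for every m ≥ 1 the string 0^{p_m} satisfies C_{S₁}(0^{p_m}) = |bin(m)| + 1, and the unique minimal description of 0^{p_m} is (T_m, 0), which uses the m-state transducer T_m; consequently 0^{p_m} ∈ L^{S₁}_{=m}. -/
/-! ### Auxiliary lemmas -/

theorem dagger_len : ∀ v : List Bool, (dagger v).length = 2 * v.length
  | [] => rfl
  | [_] => rfl
  | a :: b :: v => by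
    have h := dagger_len (b :: v)
    simp only [dagger, List.length_cons] at h ⊢
    omega

theorem diamond_len (v : List Bool) : (diamond v).length = 2 * v.length + 2 := by
  simp [diamond, dagger_len]
  omega

theorem delta_le_stdEnc (T : Transducer) (q : Fin T.n) (b : Bool) :
    2 * (T.delta q b).2.length + 2 ≤ (stdEnc T).length := by
  have h1 : 2 * (T.delta q b).2.length + 2 ≤
      (encTransition q (T.delta q false) ++ encTransition q (T.delta q true)).length := by
    cases b <;>
    · simp only [List.length_append, encTransition, diamond_len]
      omega
  have h2 : (encTransition q (T.delta q false) ++ encTransition q (T.delta q true)).length ≤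
      (stdEnc T).length := by
    rw [stdEnc, List.length_flatMap]
    exact List.single_le_sum (fun x _ => Nat.zero_le x) _
      (List.mem_map_of_mem (List.mem_finRange q))
  omega

theorem run_len (T : Transducer) : ∀ (p : List Bool) (q : Fin T.n),
    2 * ((T.run q p).2).length + 2 * p.length ≤ p.length * (stdEnc T).length
  | [], q => by simp [Transducer.run]
  | a :: x, q => by
    have h1 := delta_le_stdEnc T q a
    have h2 := run_len T x (T.delta q a).1
    simp only [Transducer.run, List.length_append, List.length_cons]
    nlinarith

theorem tsec5_delta_f0 (n : ℕ) (hn : 0 < n) (q : Fin n) (h : q.val = 0) :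
    (Tsec5 n hn).delta q false = (q, List.replicate (nthPrime n) false) := by
  simp [Tsec5, h]

theorem tsec5_delta_f1 (n : ℕ) (hn : 0 < n) (q : Fin n) (h : ¬ q.val = 0) :
    (Tsec5 n hn).delta q false = (q, []) := by
  simp [Tsec5, h]

theorem tsec5_delta_t (n : ℕ) (hn : 0 < n) (q : Fin n) :
    ((Tsec5 n hn).delta q true).2 = [] := by
  show (if h : q.val + 1 < n then ((⟨q.val + 1, h⟩ : Fin n), ([] : List Bool))
    else (q, [])).2 = []
  split <;> rfl

theorem run_cons (T : Transducer) (q : Fin T.n) (a : Bool) (x : List Bool) :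
    T.run q (a :: x) = ((T.run (T.delta q a).1 x).1,
      (T.delta q a).2 ++ (T.run (T.delta q a).1 x).2) := rfl

theorem tsec5_run (n : ℕ) (hn : 0 < n) : ∀ (p : List Bool) (q : Fin n),
    ∃ k, k ≤ p.count false ∧
      ((Tsec5 n hn).run q p).2 = List.replicate (k * nthPrime n) false
  | [], q => ⟨0, by simp [Transducer.run]⟩
  | false :: x, q => by
    obtain ⟨k, hk, hout⟩ := tsec5_run n hn x q
    by_cases h : q.val = 0
    · refine ⟨k + 1, ?_, ?_⟩
      · simp [List.count_cons]; omega
      · rw [run_cons (Tsec5 n hn) q, tsec5_delta_f0 n hn q h]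
        simp only [hout]
        rw [show (k + 1) * nthPrime n = nthPrime n + k * nthPrime n by ring,
          List.replicate_add]
    · refine ⟨k, ?_, ?_⟩
      · simp [List.count_cons]; omega
      · rw [run_cons (Tsec5 n hn) q, tsec5_delta_f1 n hn q h]
        simpa using hout
  | true :: x, q => by
    obtain ⟨k, hk, hout⟩ := tsec5_run n hn x ((Tsec5 n hn).delta q true).1
    refine ⟨k, ?_, ?_⟩
    · simp [List.count_cons]; omega
    · rw [run_cons (Tsec5 n hn) q, tsec5_delta_t n hn q]
      simpa using hout

theorem tsec5_out (n : ℕ) (hn : 0 < n) :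
    (Tsec5 n hn).output [false] = List.replicate (nthPrime n) false := by
  simp [Transducer.output, Transducer.run, Transducer.start, Tsec5]

theorem mem_D_of_decode {S : CompEncoding} {σ : List Bool} {T : Transducer}
    (h : S.decode σ = some T) : σ ∈ S.D :=
  (S.decode_dom σ).mp (by rw [h]; rfl)

theorem decode_char (S : CompEncoding) (hS : IsS1 S) (σ : List Bool) (T : Transducer)
    (h : S.decode σ = some T) :
    (T = Tsec5 T.n T.npos ∧ σ = binRep T.n) ∨
    ((∀ (n : ℕ) (hn : 0 < n), T ≠ Tsec5 n hn) ∧ σ = false :: stdEnc T) := by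
  by_cases hT : ∃ n, ∃ hn : 0 < n, T = Tsec5 n hn
  · obtain ⟨n, hn, rfl⟩ := hT
    left
    have h2 := hS.1 n hn
    exact ⟨rfl, S.decode_inj σ (mem_D_of_decode h) (binRep n) (mem_D_of_decode h2)
      (h.trans h2.symm)⟩
  · right
    push_neg at hT
    have h2 := hS.2 T hT
    exact ⟨hT, S.decode_inj σ (mem_D_of_decode h) _ (mem_D_of_decode h2)
      (h.trans h2.symm)⟩

theorem sq_lt_two_pow (k : ℕ) : k ^ 2 < 2 ^ (k + 2) := by
  induction k with
  | zero => norm_num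
  | succ n ih =>
    have h := Nat.lt_two_pow_self (n := n)
    have e1 : 2 ^ (n + 1 + 2) = 2 * 2 ^ (n + 2) := by ring
    have e2 : 2 ^ (n + 2) = 4 * 2 ^ n := by ring
    nlinarith

theorem sq_size_lt (m : ℕ) (hm : 0 < m) : (Nat.size m) ^ 2 < 8 * m := by
  set k := Nat.size m with hk
  have hk1 : 0 < k := Nat.size_pos.mpr hm
  have h2 : 2 ^ (k - 1) ≤ m := Nat.lt_size.mp (by omega)
  have h3 : 2 ^ (k - 1 + 3) = 2 ^ (k - 1) * 8 := by rw [pow_add]; norm_num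
  have h4 : k - 1 + 3 = k + 2 := by omega
  have h5 := sq_lt_two_pow k
  rw [← h4, h3] at h5
  omega

theorem nthPrime_prime (m : ℕ) : (nthPrime m).Prime := Nat.prime_nth_prime (m - 1)

theorem nthPrime_ge (m : ℕ) : m - 1 ≤ nthPrime m :=
  (Nat.nth_strictMono Nat.infinite_setOf_prime).le_apply

theorem binRep_len (m : ℕ) : (binRep m).length = Nat.size m := by
  simp [binRep, Nat.size_eq_bits_len]

theorem main_bound (S : CompEncoding) (hS : IsS1 S) (m : ℕ) (hm : 0 < m)
    (σ : List Bool) (T : Transducer) (p : List Bool)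
    (hdec : S.decode σ = some T)
    (hout : T.output p = List.replicate (nthPrime m) false) :
    (binRep m).length + 1 ≤ σ.length + p.length ∧
    (σ.length + p.length = (binRep m).length + 1 →
      T = Tsec5 m hm ∧ σ = binRep m ∧ p = [false]) := by
  rcases decode_char S hS σ T hdec with ⟨hTeq, hσ⟩ | ⟨hTne, hσ⟩
  · -- T is some Tsec5
    obtain ⟨k, hk, hout'⟩ := tsec5_run T.n T.npos p (Tsec5 T.n T.npos).start
    have houtT : T.output p = List.replicate (k * nthPrime T.n) false := by
      rw [hTeq]; exact hout'
    have hlen : k * nthPrime T.n = nthPrime m := by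
      have := houtT.symm.trans hout
      simpa using congrArg List.length this
    have hpn := nthPrime_prime T.n
    have hpm := nthPrime_prime m
    have hdvd : nthPrime T.n ∣ nthPrime m := ⟨k, by rw [← hlen]; ring⟩
    have heqp : nthPrime T.n = nthPrime m :=
      (hpm.eq_one_or_self_of_dvd _ hdvd).resolve_left hpn.ne_one
    have hk1 : k = 1 := by
      rw [heqp] at hlen
      have := hpm.pos
      nlinarith [Nat.one_le_iff_ne_zero.mpr (show k ≠ 0 by rintro rfl; simp at hlen; omega)]
    have hnm : T.n = m := by
      have := Nat.nth_injective Nat.infinite_setOf_prime heqp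
      have h1 := T.npos
      omega
    subst hnm
    have hcount : 1 ≤ p.count false := hk1 ▸ hk
    have hplen : 1 ≤ p.length := le_trans hcount List.count_le_length
    constructor
    · rw [hσ]; omega
    · intro hsum
      have hp1 : p.length = 1 := by rw [hσ] at hsum; omega
      obtain ⟨b, rfl⟩ := List.length_eq_one_iff.mp hp1
      have hb : b = false := by
        cases b
        · rfl
        · simp at hcount
      subst hb
      exact ⟨hTeq, hσ, rfl⟩
  · -- T is not a Tsec5
    have hpm := nthPrime_prime m
    have hplen : 1 ≤ p.length := by
      rcases p with _ | ⟨a, x⟩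
      · exfalso
        have h0 : T.output [] = [] := rfl
        rw [h0] at hout
        have h1 := congrArg List.length hout
        have h2 := hpm.pos
        simp at h1
        omega
      · simp
    have houtlen : ((T.run T.start p).2).length = nthPrime m := by
      have := congrArg List.length hout
      simpa [Transducer.output] using this
    have hrun := run_len T p T.start
    rw [houtlen] at hrun
    set B := (stdEnc T).length with hB
    set L := p.length with hL
    -- key: Nat.size m < B + L
    have hgep := nthPrime_ge m
    have hsq := sq_size_lt m hm
    have h4 : 4 * (L * B) ≤ (B + L) ^ 2 := by
      zify
      nlinarith [sq_nonneg ((B : ℤ) - (L : ℤ))]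
    have hgep' : m ≤ nthPrime m + 1 := by omega
    have hlt : (Nat.size m) ^ 2 < (B + L) ^ 2 := by nlinarith [hrun, h4, hsq, hgep', hplen]
    have hkey : Nat.size m < B + L := by
      by_contra hc
      push_neg at hc
      exact absurd (Nat.pow_le_pow_left hc 2) (by omega)
    have hσlen : σ.length = B + 1 := by rw [hσ]; simp [hB]
    rw [binRep_len]
    constructor
    · omega
    · intro hsum
      omega

theorem stmt13 (S : CompEncoding) (hS : IsS1 S) (m : ℕ) (hm : 0 < m) :
    S.C (List.replicate (nthPrime m) false) = (binRep m).length + 1 ∧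
    (∀ (σ : List Bool) (T : Transducer) (p : List Bool),
      S.decode σ = some T → T.output p = List.replicate (nthPrime m) false →
      σ.length + p.length = S.C (List.replicate (nthPrime m) false) →
      T = Tsec5 m hm ∧ σ = binRep m ∧ p = [false]) ∧
    List.replicate (nthPrime m) false ∈ S.Leq m := by
  have hout0 := tsec5_out m hm
  have hdec0 : S.decode (binRep m) = some (Tsec5 m hm) := hS.1 m hm
  have hmem : ((binRep m).length + 1) ∈ S.sizes (List.replicate (nthPrime m) false) :=
    ⟨binRep m, Tsec5 m hm, [false], hdec0, hout0, by simp⟩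
  have hlb : ∀ c ∈ S.sizes (List.replicate (nthPrime m) false), (binRep m).length + 1 ≤ c := by
    rintro c ⟨σ, T, p, hdec, hout, rfl⟩
    exact (main_bound S hS m hm σ T p hdec hout).1
  have hC : S.C (List.replicate (nthPrime m) false) = (binRep m).length + 1 :=
    le_antisymm (Nat.sInf_le hmem) (le_csInf ⟨_, hmem⟩ hlb)
  refine ⟨hC, fun σ T p hdec hout hlen =>
    (main_bound S hS m hm σ T p hdec hout).2 (by rw [← hC]; exact hlen), ?_, ?_⟩
  · exact ⟨binRep m, Tsec5 m hm, [false], hdec0, hout0, by simp [hC], le_refl m⟩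
  · rintro ⟨σ, T, p, hdec, hout, hlen, hsize⟩
    obtain ⟨hT, -, -⟩ := (main_bound S hS m hm σ T p hdec hout).2 (by rw [← hC]; exact hlen)
    rw [hT] at hsize
    have : (Tsec5 m hm).size = m := rfl
    omega
end
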